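/- (IKFAC accumulation lemma, part 2) Under the recursion K_t = K_{t−1}(I − (β/2) N_{t−1}) with N_i = K_i^T U_i K_i + λ K_i^T K_i − I symmetric, one has K_t K_t^T = K_0 (I − β Σ_{i=0}^{t−1} N_i) K_0^T + O(β²). -/
import Mathlib

set_option maxHeartbeats 1000000

open Matrix Finset

attribute [local instance] Matrix.linftyOpNormedAddCommGroup Matrix.linftyOpNormedRing
  Matrix.linftyOpNormedAlgebra

theorem ikfac_aux_close (n : ℕ) (K₀ : Matrix (Fin n) (Fin n) ℝ)
    (U : ℕ → Matrix (Fin n) (Fin n) ℝ) (lam : ℝ) (hlam : 0 ≤ lam)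
    (K N : ℝ → ℕ → Matrix (Fin n) (Fin n) ℝ)
    (hK0 : ∀ β, K β 0 = K₀)
    (hNsym : ∀ β i, (N β i)ᵀ = N β i)
    (hN : ∀ β i, N β i = (K β i)ᵀ * U i * K β i + lam • ((K β i)ᵀ * K β i) - 1)
    (hKrec : ∀ β t, K β (t + 1) = K β t * (1 - (β / 2) • N β t)) :
    ∀ t : ℕ, ∃ C : ℝ, 0 ≤ C ∧ ∃ δ > (0 : ℝ), ∀ β : ℝ, |β| < δ →
      ‖K β t - K₀‖ ≤ C * |β| ∧ ‖(K β t)ᵀ - K₀ᵀ‖ ≤ C * |β| := by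
  intro t
  induction t with
  | zero => exact ⟨0, le_refl 0, 1, one_pos, fun β _ => by simp [hK0]⟩
  | succ t ih =>
    obtain ⟨C, hC, δ, hδ, hb⟩ := ih
    set M : ℝ := ‖K₀‖ + C * δ with hMdef
    set M' : ℝ := ‖K₀ᵀ‖ + C * δ with hM'def
    have hM : 0 ≤ M := by positivity
    have hM' : 0 ≤ M' := by positivity
    set P : ℝ := M' * ‖U t‖ * M + lam * (M' * M) + ‖(1 : Matrix (Fin n) (Fin n) ℝ)‖ with hPdef
    have hP : 0 ≤ P := by positivity
    clear_value M M' P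
    refine ⟨C + (M + M') * P / 2, by nlinarith [mul_nonneg (add_nonneg hM hM') hP], δ, hδ,
      fun β hβ => ?_⟩
    obtain ⟨hb1, hb2⟩ := hb β hβ
    have hβδ : C * |β| ≤ C * δ := by
      apply mul_le_mul_of_nonneg_left (le_of_lt hβ) hC
    have hKb : ‖K β t‖ ≤ M := by
      calc ‖K β t‖ = ‖K₀ + (K β t - K₀)‖ := by congr 1; abel
        _ ≤ ‖K₀‖ + ‖K β t - K₀‖ := norm_add_le _ _
        _ ≤ ‖K₀‖ + C * δ := by linarith
        _ = M := hMdef.symm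
    have hKbT : ‖(K β t)ᵀ‖ ≤ M' := by
      calc ‖(K β t)ᵀ‖ = ‖K₀ᵀ + ((K β t)ᵀ - K₀ᵀ)‖ := by congr 1; abel
        _ ≤ ‖K₀ᵀ‖ + ‖(K β t)ᵀ - K₀ᵀ‖ := norm_add_le _ _
        _ ≤ ‖K₀ᵀ‖ + C * δ := by linarith
        _ = M' := hM'def.symm
    have hNb : ‖N β t‖ ≤ P := by
      rw [hN]
      calc ‖(K β t)ᵀ * U t * K β t + lam • ((K β t)ᵀ * K β t) - 1‖
          ≤ ‖(K β t)ᵀ * U t * K β t + lam • ((K β t)ᵀ * K β t)‖ + ‖(1 : Matrix (Fin n) (Fin n) ℝ)‖ :=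
            norm_sub_le _ _
        _ ≤ ‖(K β t)ᵀ * U t * K β t‖ + ‖lam • ((K β t)ᵀ * K β t)‖ + ‖(1 : Matrix (Fin n) (Fin n) ℝ)‖ := by
            gcongr; exact norm_add_le _ _
        _ ≤ M' * ‖U t‖ * M + lam * (M' * M) + ‖(1 : Matrix (Fin n) (Fin n) ℝ)‖ := by
            gcongr ?_ + ?_ + _
            · calc ‖(K β t)ᵀ * U t * K β t‖ ≤ ‖(K β t)ᵀ * U t‖ * ‖K β t‖ := norm_mul_le _ _
                _ ≤ ‖(K β t)ᵀ‖ * ‖U t‖ * ‖K β t‖ := by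
                    gcongr
                    exact norm_mul_le _ _
                _ ≤ M' * ‖U t‖ * M := by gcongr
            · rw [norm_smul, Real.norm_eq_abs, abs_of_nonneg hlam]
              gcongr
              calc ‖(K β t)ᵀ * K β t‖ ≤ ‖(K β t)ᵀ‖ * ‖K β t‖ := norm_mul_le _ _
                _ ≤ M' * M := by gcongr
        _ = P := hPdef.symm
    have hKNb : ‖K β t * N β t‖ ≤ M * P := by
      calc ‖K β t * N β t‖ ≤ ‖K β t‖ * ‖N β t‖ := norm_mul_le _ _
        _ ≤ M * P := by gcongr
    have hNKb : ‖N β t * (K β t)ᵀ‖ ≤ P * M' := by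
      calc ‖N β t * (K β t)ᵀ‖ ≤ ‖N β t‖ * ‖(K β t)ᵀ‖ := norm_mul_le _ _
        _ ≤ P * M' := by gcongr
    have key : K β (t + 1) - K₀ = (K β t - K₀) - (β / 2) • (K β t * N β t) := by
      rw [hKrec, mul_sub, mul_one, mul_smul_comm]; abel
    have keyT : (K β (t + 1))ᵀ - K₀ᵀ = ((K β t)ᵀ - K₀ᵀ) - (β / 2) • (N β t * (K β t)ᵀ) := by
      rw [hKrec, transpose_mul, transpose_sub, transpose_smul, transpose_one, hNsym,
        sub_mul, one_mul, smul_mul_assoc]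
      abel
    have habs : |β / 2| = |β| / 2 := by rw [abs_div]; norm_num
    constructor
    · rw [key]
      calc ‖(K β t - K₀) - (β / 2) • (K β t * N β t)‖
          ≤ ‖K β t - K₀‖ + ‖(β / 2) • (K β t * N β t)‖ := norm_sub_le _ _
        _ ≤ C * |β| + |β| / 2 * (M * P) := by
            rw [norm_smul, Real.norm_eq_abs, habs]
            gcongr
        _ ≤ (C + (M + M') * P / 2) * |β| := by nlinarith [mul_nonneg (mul_nonneg hM' hP) (abs_nonneg β)]
    · rw [keyT]
      calc ‖((K β t)ᵀ - K₀ᵀ) - (β / 2) • (N β t * (K β t)ᵀ)‖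
          ≤ ‖(K β t)ᵀ - K₀ᵀ‖ + ‖(β / 2) • (N β t * (K β t)ᵀ)‖ := norm_sub_le _ _
        _ ≤ C * |β| + |β| / 2 * (P * M') := by
            rw [norm_smul, Real.norm_eq_abs, habs]
            gcongr
        _ ≤ (C + (M + M') * P / 2) * |β| := by nlinarith [mul_nonneg (mul_nonneg hM hP) (abs_nonneg β)]


/-- IKFAC accumulation lemma, part 2:
`K_t K_tᵀ = K₀ (I − β Σ_{i<t} N_i) K₀ᵀ + O(β²)` for each fixed `t`. -/
theorem ikfac_accumulation_product (n : ℕ) (K₀ : Matrix (Fin n) (Fin n) ℝ)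
    (hK₀ : IsUnit K₀.det)
    (U : ℕ → Matrix (Fin n) (Fin n) ℝ) (hU : ∀ i, (U i)ᵀ = U i) (lam : ℝ) (hlam : 0 ≤ lam)
    (K : ℝ → ℕ → Matrix (Fin n) (Fin n) ℝ)
    (N : ℝ → ℕ → Matrix (Fin n) (Fin n) ℝ)
    (hK0 : ∀ β, K β 0 = K₀)
    (hN : ∀ β i, N β i = (K β i)ᵀ * U i * K β i + lam • ((K β i)ᵀ * K β i) - 1)
    (hKrec : ∀ β t, K β (t + 1) = K β t * (1 - (β / 2) • N β t)) :
    ∀ t : ℕ, ∃ C : ℝ, ∃ δ > (0 : ℝ), ∀ β : ℝ, |β| < δ →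
      ‖K β t * (K β t)ᵀ -
        K₀ * (1 - β • ∑ i ∈ Finset.range t, N β i) * K₀ᵀ‖ ≤ C * β ^ 2 := by
  have hNsym : ∀ β i, (N β i)ᵀ = N β i := by
    intro β i
    rw [hN]
    simp [transpose_sub, transpose_add, transpose_mul, transpose_smul, hU, mul_assoc]
  intro t
  induction t with
  | zero =>
    refine ⟨1, 1, one_pos, fun β _ => ?_⟩
    have h0 : K β 0 * (K β 0)ᵀ - K₀ * (1 - β • ∑ i ∈ Finset.range 0, N β i) * K₀ᵀ = 0 := by
      simp [hK0]
    rw [h0, norm_zero]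
    positivity
  | succ t ih =>
    obtain ⟨C1, δ1, hδ1, h1⟩ := ih
    obtain ⟨C2, hC2, δ2, hδ2, h2⟩ :=
      ikfac_aux_close n K₀ U lam hlam K N hK0 hNsym hN hKrec t
    set M : ℝ := ‖K₀‖ + C2 * δ2 with hMdef
    set M' : ℝ := ‖K₀ᵀ‖ + C2 * δ2 with hM'def
    have hM : 0 ≤ M := by positivity
    have hM' : 0 ≤ M' := by positivity
    set P : ℝ := M' * ‖U t‖ * M + lam * (M' * M) + ‖(1 : Matrix (Fin n) (Fin n) ℝ)‖ with hPdef
    have hP : 0 ≤ P := by positivity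
    clear_value M M' P
    refine ⟨C1 + C2 * P * (M' + ‖K₀‖) + M * P * P * M' / 4, min δ1 δ2,
      lt_min hδ1 hδ2, fun β hβ => ?_⟩
    have hβ1 : |β| < δ1 := lt_of_lt_of_le hβ (min_le_left _ _)
    have hβ2 : |β| < δ2 := lt_of_lt_of_le hβ (min_le_right _ _)
    obtain ⟨hb1, hb2⟩ := h2 β hβ2
    have hβδ : C2 * |β| ≤ C2 * δ2 := mul_le_mul_of_nonneg_left (le_of_lt hβ2) hC2
    have hKb : ‖K β t‖ ≤ M := by
      calc ‖K β t‖ = ‖K₀ + (K β t - K₀)‖ := by congr 1; abel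
        _ ≤ ‖K₀‖ + ‖K β t - K₀‖ := norm_add_le _ _
        _ ≤ ‖K₀‖ + C2 * δ2 := by linarith
        _ = M := hMdef.symm
    have hKbT : ‖(K β t)ᵀ‖ ≤ M' := by
      calc ‖(K β t)ᵀ‖ = ‖K₀ᵀ + ((K β t)ᵀ - K₀ᵀ)‖ := by congr 1; abel
        _ ≤ ‖K₀ᵀ‖ + ‖(K β t)ᵀ - K₀ᵀ‖ := norm_add_le _ _
        _ ≤ ‖K₀ᵀ‖ + C2 * δ2 := by linarith
        _ = M' := hM'def.symm
    have hNb : ‖N β t‖ ≤ P := by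
      rw [hN]
      calc ‖(K β t)ᵀ * U t * K β t + lam • ((K β t)ᵀ * K β t) - 1‖
          ≤ ‖(K β t)ᵀ * U t * K β t + lam • ((K β t)ᵀ * K β t)‖ +
              ‖(1 : Matrix (Fin n) (Fin n) ℝ)‖ := norm_sub_le _ _
        _ ≤ ‖(K β t)ᵀ * U t * K β t‖ + ‖lam • ((K β t)ᵀ * K β t)‖ +
              ‖(1 : Matrix (Fin n) (Fin n) ℝ)‖ := by
            gcongr; exact norm_add_le _ _
        _ ≤ M' * ‖U t‖ * M + lam * (M' * M) + ‖(1 : Matrix (Fin n) (Fin n) ℝ)‖ := by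
            gcongr ?_ + ?_ + _
            · calc ‖(K β t)ᵀ * U t * K β t‖ ≤ ‖(K β t)ᵀ * U t‖ * ‖K β t‖ := norm_mul_le _ _
                _ ≤ ‖(K β t)ᵀ‖ * ‖U t‖ * ‖K β t‖ := by
                    gcongr
                    exact norm_mul_le _ _
                _ ≤ M' * ‖U t‖ * M := by gcongr
            · rw [norm_smul, Real.norm_eq_abs, abs_of_nonneg hlam]
              gcongr
              calc ‖(K β t)ᵀ * K β t‖ ≤ ‖(K β t)ᵀ‖ * ‖K β t‖ := norm_mul_le _ _
                _ ≤ M' * M := by gcongr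
        _ = P := hPdef.symm
    have key : K β (t + 1) * (K β (t + 1))ᵀ -
          K₀ * (1 - β • ∑ i ∈ Finset.range (t + 1), N β i) * K₀ᵀ =
        (K β t * (K β t)ᵀ - K₀ * (1 - β • ∑ i ∈ Finset.range t, N β i) * K₀ᵀ)
          - β • ((K β t - K₀) * N β t * (K β t)ᵀ + K₀ * N β t * ((K β t)ᵀ - K₀ᵀ))
          + (β ^ 2 / 4) • (K β t * (N β t * N β t) * (K β t)ᵀ) := by
      rw [Finset.sum_range_succ, hKrec, transpose_mul, transpose_sub, transpose_smul,
        transpose_one, hNsym β t]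
      simp only [mul_sub, sub_mul, mul_add, add_mul, mul_one, one_mul, smul_mul_assoc,
        mul_smul_comm, smul_smul, smul_sub, smul_add, mul_assoc]
      module
    have hE1 : ‖K β t * (K β t)ᵀ - K₀ * (1 - β • ∑ i ∈ Finset.range t, N β i) * K₀ᵀ‖ ≤
        C1 * β ^ 2 := h1 β hβ1
    have hY : ‖(K β t - K₀) * N β t * (K β t)ᵀ + K₀ * N β t * ((K β t)ᵀ - K₀ᵀ)‖ ≤
        C2 * |β| * P * M' + ‖K₀‖ * P * (C2 * |β|) := by
      calc ‖(K β t - K₀) * N β t * (K β t)ᵀ + K₀ * N β t * ((K β t)ᵀ - K₀ᵀ)‖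
          ≤ ‖(K β t - K₀) * N β t * (K β t)ᵀ‖ + ‖K₀ * N β t * ((K β t)ᵀ - K₀ᵀ)‖ :=
            norm_add_le _ _
        _ ≤ C2 * |β| * P * M' + ‖K₀‖ * P * (C2 * |β|) := by
            gcongr ?_ + ?_
            · calc ‖(K β t - K₀) * N β t * (K β t)ᵀ‖
                  ≤ ‖(K β t - K₀) * N β t‖ * ‖(K β t)ᵀ‖ := norm_mul_le _ _
                _ ≤ ‖K β t - K₀‖ * ‖N β t‖ * ‖(K β t)ᵀ‖ := by
                    gcongr
                    exact norm_mul_le _ _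
                _ ≤ C2 * |β| * P * M' := by gcongr
            · calc ‖K₀ * N β t * ((K β t)ᵀ - K₀ᵀ)‖
                  ≤ ‖K₀ * N β t‖ * ‖(K β t)ᵀ - K₀ᵀ‖ := norm_mul_le _ _
                _ ≤ ‖K₀‖ * ‖N β t‖ * ‖(K β t)ᵀ - K₀ᵀ‖ := by
                    gcongr
                    exact norm_mul_le _ _
                _ ≤ ‖K₀‖ * P * (C2 * |β|) := by gcongr
    have hZ : ‖K β t * (N β t * N β t) * (K β t)ᵀ‖ ≤ M * (P * P) * M' := by
      calc ‖K β t * (N β t * N β t) * (K β t)ᵀ‖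
          ≤ ‖K β t * (N β t * N β t)‖ * ‖(K β t)ᵀ‖ := norm_mul_le _ _
        _ ≤ ‖K β t‖ * ‖N β t * N β t‖ * ‖(K β t)ᵀ‖ := by
            gcongr
            exact norm_mul_le _ _
        _ ≤ ‖K β t‖ * (‖N β t‖ * ‖N β t‖) * ‖(K β t)ᵀ‖ := by
            gcongr
            exact norm_mul_le _ _
        _ ≤ M * (P * P) * M' := by gcongr
    have habs : |β| * |β| = β ^ 2 := by rw [← abs_mul, ← sq, abs_of_nonneg (sq_nonneg β)]
    rw [key]
    calc ‖(K β t * (K β t)ᵀ - K₀ * (1 - β • ∑ i ∈ Finset.range t, N β i) * K₀ᵀ)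
            - β • ((K β t - K₀) * N β t * (K β t)ᵀ + K₀ * N β t * ((K β t)ᵀ - K₀ᵀ))
            + (β ^ 2 / 4) • (K β t * (N β t * N β t) * (K β t)ᵀ)‖
        ≤ ‖(K β t * (K β t)ᵀ - K₀ * (1 - β • ∑ i ∈ Finset.range t, N β i) * K₀ᵀ)
            - β • ((K β t - K₀) * N β t * (K β t)ᵀ + K₀ * N β t * ((K β t)ᵀ - K₀ᵀ))‖
            + ‖(β ^ 2 / 4) • (K β t * (N β t * N β t) * (K β t)ᵀ)‖ := norm_add_le _ _
      _ ≤ ‖K β t * (K β t)ᵀ - K₀ * (1 - β • ∑ i ∈ Finset.range t, N β i) * K₀ᵀ‖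
            + ‖β • ((K β t - K₀) * N β t * (K β t)ᵀ + K₀ * N β t * ((K β t)ᵀ - K₀ᵀ))‖
            + ‖(β ^ 2 / 4) • (K β t * (N β t * N β t) * (K β t)ᵀ)‖ := by
          gcongr ?_ + _
          exact norm_sub_le _ _
      _ = ‖K β t * (K β t)ᵀ - K₀ * (1 - β • ∑ i ∈ Finset.range t, N β i) * K₀ᵀ‖
            + |β| * ‖(K β t - K₀) * N β t * (K β t)ᵀ + K₀ * N β t * ((K β t)ᵀ - K₀ᵀ)‖
            + (β ^ 2 / 4) * ‖K β t * (N β t * N β t) * (K β t)ᵀ‖ := by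
          rw [norm_smul, norm_smul, Real.norm_eq_abs, Real.norm_eq_abs,
            abs_of_nonneg (by positivity : (0:ℝ) ≤ β ^ 2 / 4)]
      _ ≤ C1 * β ^ 2 + |β| * (C2 * |β| * P * M' + ‖K₀‖ * P * (C2 * |β|))
            + (β ^ 2 / 4) * (M * (P * P) * M') := by gcongr
      _ = (C1 + C2 * P * (M' + ‖K₀‖) + M * P * P * M' / 4) * β ^ 2 := by
          linear_combination (C2 * P * M' + ‖K₀‖ * P * C2) * habs
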